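/- arXiv:2605.19469 — 4 statements merged into one kernel-verified Lean document; each statement's English description precedes it below -/
import Mathlib

section
/- Let d_z ≥ 1, N ≥ 1, d_x ≥ 1 be integers and σ_w > 0, L_k ≥ 0 reals. Let k : ℝ^{d_z} × ℝ^{d_z} → ℝ be a symmetric positive semidefinite kernel (every finite Gram matrix is positive semidefinite) that is L_k-Lipschitz in each argument, i.e. |k(z, w) − k(z', w)| ≤ L_k ‖z − z'‖ for all z, z', w. Fix data points z_1, …, z_N ∈ ℝ^{d_z}, and let σ_N²(z) := k(z, z) − k_v(z)ᵀ (K + σ_w² I_N)⁻¹ k_v(z) be the Gaussian process posterior variance, where K is the N×N Gram matrix K_{ij} = k(z_i, z_j) and k_v(z) ∈ ℝ^N has entries k(z_i, z). Define s(z) := √(d_x) · √(σ_N²(z)). Then for all z, z' ∈ ℝ^{d_z}: |s(z) − s(z')| ≤ √(2 d_x L_k) · ‖z − z'‖^{1/2}. -/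
open Matrix

/-- `k` is a symmetric positive semidefinite kernel: every finite Gram matrix is PSD. -/
def IsPSDKernel {E : Type*} (k : E → E → ℝ) : Prop :=
  (∀ z w, k z w = k w z) ∧
    ∀ (m : ℕ) (v : Fin m → E) (c : Fin m → ℝ),
      0 ≤ ∑ i, ∑ j, c i * c j * k (v i) (v j)

/-- The Gram matrix of a kernel at points `zs`. -/
noncomputable def gramMatrix {E : Type*} (k : E → E → ℝ) {m : ℕ} (zs : Fin m → E) :
    Matrix (Fin m) (Fin m) ℝ :=
  Matrix.of fun i j => k (zs i) (zs j)

/-- The Gaussian process posterior variance at `z` given data points `zs` and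
noise variance `σw²`: `σ²(z) = k(z,z) − k_v(z)ᵀ (K + σw² I)⁻¹ k_v(z)`. -/
noncomputable def postVar {E : Type*} (k : E → E → ℝ) (σw : ℝ) {m : ℕ} (zs : Fin m → E)
    (z : E) : ℝ :=
  k z z - (fun i => k (zs i) z) ⬝ᵥ
    ((gramMatrix k zs + σw ^ 2 • (1 : Matrix (Fin m) (Fin m) ℝ))⁻¹ *ᵥ (fun i => k (zs i) z))

lemma gram_posSemidef {E : Type*} {k : E → E → ℝ} (hk : IsPSDKernel k) {m : ℕ}
    (v : Fin m → E) : (gramMatrix k v).PosSemidef := by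
  refine Matrix.PosSemidef.of_dotProduct_mulVec_nonneg ?_ fun x => ?_
  · ext i j
    simp [Matrix.conjTranspose_apply, gramMatrix, hk.1 (v j) (v i)]
  · have h := hk.2 m v x
    refine h.trans_eq ?_
    simp only [dotProduct, Matrix.mulVec, Pi.star_apply, star_trivial, gramMatrix,
      Matrix.of_apply, Finset.mul_sum, dotProduct]
    exact Finset.sum_congr rfl fun i _ => Finset.sum_congr rfl fun j _ => by ring

lemma sqrtForm_diff_le {p : ℕ} {B : Matrix (Fin p) (Fin p) ℝ} (hB : B.PosSemidef)
    (hB1 : ((1 : Matrix (Fin p) (Fin p) ℝ) - B).PosSemidef) (x y : Fin p → ℝ) :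
    |Real.sqrt (x ⬝ᵥ B *ᵥ x) - Real.sqrt (y ⬝ᵥ B *ᵥ y)| ≤
      Real.sqrt ((x - y) ⬝ᵥ (x - y)) := by
  have hex : ∃ R : Matrix (Fin p) (Fin p) ℝ, IsSelfAdjoint R ∧ R * R = B := by
    open scoped MatrixOrder in
    obtain ⟨X, h1, -, h2⟩ := CFC.exists_sqrt_of_isSelfAdjoint_of_quasispectrumRestricts
      hB.isHermitian (QuasispectrumRestricts.nnreal_of_nonneg hB.nonneg)
    exact ⟨X, h1, h2⟩
  obtain ⟨R, hRsa, hRR'⟩ := hex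
  have hRR : R * R = B := hRR'
  have hRh : Rᵀ = R := by
    rw [← Matrix.conjTranspose_eq_transpose_of_trivial]; exact hRsa
  have hform : ∀ v : Fin p → ℝ, v ⬝ᵥ B *ᵥ v = (R *ᵥ v) ⬝ᵥ (R *ᵥ v) := by
    intro v
    rw [dotProduct_mulVec (R *ᵥ v) R v, ← hRh, vecMul_transpose, hRh, mulVec_mulVec, hRR,
      dotProduct_comm]
  have hnorm : ∀ v : Fin p → ℝ,
      Real.sqrt (v ⬝ᵥ v) = ‖(WithLp.equiv 2 (Fin p → ℝ)).symm v‖ := by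
    intro v
    rw [EuclideanSpace.norm_eq]
    congr 1
    simp [dotProduct, Real.norm_eq_abs, sq_abs, sq]
  have key : |Real.sqrt (x ⬝ᵥ B *ᵥ x) - Real.sqrt (y ⬝ᵥ B *ᵥ y)| ≤
      Real.sqrt ((x - y) ⬝ᵥ B *ᵥ (x - y)) := by
    rw [hform x, hform y, hform (x - y), hnorm, hnorm, hnorm, mulVec_sub,
      WithLp.equiv_symm_apply, WithLp.toLp_sub]
    exact abs_norm_sub_norm_le _ _
  refine key.trans (Real.sqrt_le_sqrt ?_)
  have h := hB1.dotProduct_mulVec_nonneg (x - y)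
  simp only [star_trivial, sub_mulVec, one_mulVec, dotProduct_sub] at h ⊢
  linarith

lemma smulone_posDef {n : ℕ} {σ : ℝ} (hσ : 0 < σ) :
    (σ ^ 2 • (1 : Matrix (Fin n) (Fin n) ℝ)).PosDef := by
  rw [smul_one_eq_diagonal]
  exact Matrix.PosDef.diagonal fun i => by positivity

lemma posSemidef_smul {n : ℕ} {M : Matrix (Fin n) (Fin n) ℝ} (hM : M.PosSemidef)
    {c : ℝ} (hc : 0 ≤ c) : (c • M).PosSemidef := by
  have hherm : (c • M).IsHermitian := by
    rw [Matrix.IsHermitian, Matrix.conjTranspose_smul, star_trivial, hM.1.eq]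
  refine Matrix.PosSemidef.of_dotProduct_mulVec_nonneg hherm fun x => ?_
  have := hM.dotProduct_mulVec_nonneg x
  simp only [Matrix.smul_mulVec, dotProduct_smul, smul_eq_mul]
  exact mul_nonneg hc this

/-- push-through: `1 - Cᴴ (C Cᴴ + σ²)⁻¹ C = σ² (Cᴴ C + σ²)⁻¹`, hence PSD. -/
lemma one_sub_psd {n p : ℕ} (C : Matrix (Fin n) (Fin p) ℝ) {σ : ℝ} (hσ : 0 < σ) :
    ((1 : Matrix (Fin p) (Fin p) ℝ) -
      Cᴴ * (C * Cᴴ + σ ^ 2 • (1 : Matrix (Fin n) (Fin n) ℝ))⁻¹ * C).PosSemidef := by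
  set A := C * Cᴴ + σ ^ 2 • (1 : Matrix (Fin n) (Fin n) ℝ) with hAdef
  set A' := Cᴴ * C + σ ^ 2 • (1 : Matrix (Fin p) (Fin p) ℝ) with hA'def
  have hA : A.PosDef := Matrix.PosDef.posSemidef_add
    (Matrix.posSemidef_self_mul_conjTranspose C) (smulone_posDef hσ)
  have hA' : A'.PosDef := Matrix.PosDef.posSemidef_add
    (Matrix.posSemidef_conjTranspose_mul_self C) (smulone_posDef hσ)
  have hdA : IsUnit A.det := hA.isUnit.map (Matrix.detMonoidHom)
  have hdA' : IsUnit A'.det := hA'.isUnit.map (Matrix.detMonoidHom)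
  have push : A' * Cᴴ = Cᴴ * A := by
    rw [hAdef, hA'def]
    simp only [Matrix.add_mul, Matrix.mul_add, Matrix.smul_mul, Matrix.mul_smul,
      Matrix.one_mul, Matrix.mul_one, Matrix.mul_assoc]
  have push' : Cᴴ * A⁻¹ = A'⁻¹ * Cᴴ := by
    have e1 : A'⁻¹ * (A' * Cᴴ) * A⁻¹ = Cᴴ * A⁻¹ := by
      rw [← Matrix.mul_assoc, Matrix.nonsing_inv_mul A' hdA', Matrix.one_mul]
    have e2 : A'⁻¹ * (Cᴴ * A) * A⁻¹ = A'⁻¹ * Cᴴ := by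
      rw [Matrix.mul_assoc A'⁻¹ (Cᴴ * A) A⁻¹, Matrix.mul_assoc Cᴴ A A⁻¹,
        Matrix.mul_nonsing_inv A hdA, Matrix.mul_one]
    rw [← e1, push, e2]
  have key : (1 : Matrix (Fin p) (Fin p) ℝ) - Cᴴ * A⁻¹ * C = σ ^ 2 • A'⁻¹ := by
    rw [push', Matrix.mul_assoc]
    have hCC : Cᴴ * C = A' - σ ^ 2 • (1 : Matrix (Fin p) (Fin p) ℝ) := by
      rw [hA'def, add_sub_cancel_right]
    rw [hCC, Matrix.mul_sub, Matrix.nonsing_inv_mul A' hdA', Matrix.mul_smul,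
      Matrix.mul_one, sub_sub_cancel]
  rw [key]
  exact posSemidef_smul hA'.inv.posSemidef (by positivity)

/-- Hölder continuity of the scaled posterior standard deviation `s(z) = √d_x · σ_N(z)`:
`|s(z) − s(z')| ≤ √(2 d_x L_k) ‖z − z'‖^{1/2}` for an `L_k`-Lipschitz PSD kernel. -/
theorem stmt_6 (dz N dx : ℕ) (hdz : 1 ≤ dz) (hN : 1 ≤ N) (hdx : 1 ≤ dx)
    (σw : ℝ) (hσw : 0 < σw) (Lk : ℝ) (hLk : 0 ≤ Lk)
    (k : EuclideanSpace ℝ (Fin dz) → EuclideanSpace ℝ (Fin dz) → ℝ)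
    (hk : IsPSDKernel k)
    (hkLip : ∀ z z' w : EuclideanSpace ℝ (Fin dz), |k z w - k z' w| ≤ Lk * ‖z - z'‖)
    (zs : Fin N → EuclideanSpace ℝ (Fin dz)) :
    ∀ z z' : EuclideanSpace ℝ (Fin dz),
      |Real.sqrt dx * Real.sqrt (postVar k σw zs z) -
          Real.sqrt dx * Real.sqrt (postVar k σw zs z')| ≤
        Real.sqrt (2 * dx * Lk) * ‖z - z'‖ ^ ((1 : ℝ) / 2) := by
  intro z z'
  -- the N+2 points
  set p := N + 2 with hp
  have hNp : N < p := by omega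
  have hNp' : N + 1 < p := by omega
  set emb : Fin N → Fin p := fun i => ⟨i, by omega⟩ with hemb
  set iz : Fin p := ⟨N, hNp⟩ with hiz
  set iz' : Fin p := ⟨N + 1, hNp'⟩ with hiz'
  set w : Fin p → EuclideanSpace ℝ (Fin dz) := fun a => if h : (a : ℕ) < N then zs ⟨a, h⟩
    else if (a : ℕ) = N then z else z' with hw
  have hwe : ∀ i, w (emb i) = zs i := fun i => dif_pos i.isLt
  have hwz : w iz = z := by
    show (if h : N < N then zs ⟨N, h⟩ else if N = N then z else z') = z
    rw [dif_neg (lt_irrefl N), if_pos rfl]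
  have hwz' : w iz' = z' := by
    show (if h : N + 1 < N then zs ⟨N + 1, h⟩ else if N + 1 = N then z else z') = z'
    rw [dif_neg (by omega), if_neg (by omega)]
  set G := gramMatrix k w with hGdef
  have hG : G.PosSemidef := gram_posSemidef hk w
  have hex : ∃ S : Matrix (Fin p) (Fin p) ℝ, IsSelfAdjoint S ∧ S * S = G := by
    open scoped MatrixOrder in
    obtain ⟨X, h1, -, h2⟩ := CFC.exists_sqrt_of_isSelfAdjoint_of_quasispectrumRestricts
      hG.isHermitian (QuasispectrumRestricts.nnreal_of_nonneg hG.nonneg)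
    exact ⟨X, h1, h2⟩
  obtain ⟨S, hSsa, hSS'⟩ := hex
  have hSS : S * S = G := hSS'
  have hSt : Sᵀ = S := by
    rw [← Matrix.conjTranspose_eq_transpose_of_trivial]; exact hSsa
  set P : Matrix (Fin N) (Fin p) ℝ :=
    (1 : Matrix (Fin p) (Fin p) ℝ).submatrix emb id with hPdef
  set C := P * S with hCdef
  -- P-multiplication facts
  have hPG : P * G = G.submatrix emb id := by
    ext i b
    simp [hPdef, Matrix.mul_apply, Matrix.one_apply, ite_mul]
  have hP2 : G.submatrix emb id * Pᴴ = G.submatrix emb emb := by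
    ext i j
    simp [hPdef, Matrix.mul_apply, Matrix.one_apply, mul_ite,
      Matrix.conjTranspose_apply]
  have hCC : C * Cᴴ = gramMatrix k zs := by
    have h1 : C * Cᴴ = P * G * Pᴴ := by
      rw [hCdef, Matrix.conjTranspose_mul,
        Matrix.conjTranspose_eq_transpose_of_trivial, hSt,
        Matrix.mul_assoc P S (S * Pᴴ), ← Matrix.mul_assoc S S Pᴴ, hSS,
        ← Matrix.mul_assoc]
    rw [h1, hPG, hP2]
    ext i j
    simp [hGdef, gramMatrix, Matrix.submatrix_apply, hwe]
  set A := gramMatrix k zs + σw ^ 2 • (1 : Matrix (Fin N) (Fin N) ℝ) with hAdef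
  have hApos : A.PosDef :=
    Matrix.PosDef.posSemidef_add (gram_posSemidef hk zs) (smulone_posDef hσw)
  set B := (1 : Matrix (Fin p) (Fin p) ℝ) - Cᴴ * A⁻¹ * C with hBdef
  have hB : B.PosSemidef := by
    have h := one_sub_psd C hσw
    rwa [hCC, ← hAdef] at h
  have hIB : ((1 : Matrix (Fin p) (Fin p) ℝ) - B).PosSemidef := by
    have h : (1 : Matrix (Fin p) (Fin p) ℝ) - B = Cᴴ * A⁻¹ * C := by
      rw [hBdef, sub_sub_cancel]
    rw [h]
    exact hApos.inv.posSemidef.conjTranspose_mul_mul_same C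
  -- feature vectors
  set u : Fin p → ℝ := Pi.single iz 1 with hu
  set u' : Fin p → ℝ := Pi.single iz' 1 with hu'
  set φ := S *ᵥ u with hφ
  set ψ := S *ᵥ u' with hψ
  have hSq : ∀ v v' : Fin p → ℝ, (S *ᵥ v) ⬝ᵥ (S *ᵥ v') = (G *ᵥ v) ⬝ᵥ v' := by
    intro v v'
    rw [dotProduct_mulVec (S *ᵥ v) S v', ← hSt, vecMul_transpose, hSt,
      Matrix.mulVec_mulVec, hSS]
  -- `C *ᵥ (S *ᵥ e)` recovers the kernel vector
  have hCmul : ∀ (a : Fin p), C *ᵥ (S *ᵥ Pi.single a 1) = fun i => k (zs i) (w a) := by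
    intro a
    rw [Matrix.mulVec_mulVec, hCdef, Matrix.mul_assoc, hSS, hPG]
    funext i
    rw [Matrix.mulVec_single]
    simp [Matrix.submatrix_apply, hGdef, gramMatrix, hwe]
  -- quadratic form equals the posterior variance
  have hquad : ∀ (a : Fin p),
      (S *ᵥ Pi.single a 1) ⬝ᵥ B *ᵥ (S *ᵥ Pi.single a 1) = postVar k σw zs (w a) := by
    intro a
    set v := S *ᵥ Pi.single a 1 with hv
    have hvv : v ⬝ᵥ v = k (w a) (w a) := by
      rw [hv, hSq, Matrix.mulVec_single]
      simp [dotProduct_single, hGdef, gramMatrix]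
    have hform : v ⬝ᵥ (Cᴴ * A⁻¹ * C) *ᵥ v =
        (fun i => k (zs i) (w a)) ⬝ᵥ A⁻¹ *ᵥ (fun i => k (zs i) (w a)) := by
      rw [Matrix.mul_assoc, ← Matrix.mulVec_mulVec v Cᴴ (A⁻¹ * C),
        dotProduct_mulVec v Cᴴ _,
        Matrix.conjTranspose_eq_transpose_of_trivial, vecMul_transpose,
        ← Matrix.mulVec_mulVec v A⁻¹ C, hv, hCmul a]
    rw [hBdef, Matrix.sub_mulVec, dotProduct_sub, Matrix.one_mulVec, hvv, hform,
      postVar]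
  have hmain := sqrtForm_diff_le hB hIB φ ψ
  rw [hφ, hψ, hquad iz, hquad iz', hwz, hwz'] at hmain
  -- bound the dot product of the difference of features
  have hdd : (φ - ψ) ⬝ᵥ (φ - ψ) = k z z - k z z' - k z' z + k z' z' := by
    rw [hφ, hψ, ← Matrix.mulVec_sub, hSq, Matrix.mulVec_sub, sub_dotProduct,
      dotProduct_sub, dotProduct_sub, Matrix.mulVec_single_one, Matrix.mulVec_single_one,
      hu, hu']
    simp only [dotProduct_single, mul_one, Matrix.col_apply]
    have e1 : G iz iz = k z z := by simp [hGdef, gramMatrix, hwz]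
    have e2 : G iz iz' = k z z' := by simp [hGdef, gramMatrix, hwz, hwz']
    have e3 : G iz' iz = k z' z := by simp [hGdef, gramMatrix, hwz, hwz']
    have e4 : G iz' iz' = k z' z' := by simp [hGdef, gramMatrix, hwz']
    rw [e1, e2, e3, e4]
    ring
  have hbound : (φ - ψ) ⬝ᵥ (φ - ψ) ≤ 2 * Lk * ‖z - z'‖ := by
    rw [hdd]
    have h1 := (abs_le.1 (hkLip z z' z)).2
    have h2 := (abs_le.1 (hkLip z' z z')).2
    rw [norm_sub_rev] at h2
    have h3 : k z' z = k z z' := hk.1 z' z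
    linarith
  have hmain2 : |Real.sqrt (postVar k σw zs z) - Real.sqrt (postVar k σw zs z')| ≤
      Real.sqrt (2 * Lk * ‖z - z'‖) :=
    hmain.trans (Real.sqrt_le_sqrt hbound)
  rw [← mul_sub, abs_mul, abs_of_nonneg (Real.sqrt_nonneg _)]
  calc Real.sqrt dx * |Real.sqrt (postVar k σw zs z) - Real.sqrt (postVar k σw zs z')|
      ≤ Real.sqrt dx * Real.sqrt (2 * Lk * ‖z - z'‖) :=
        mul_le_mul_of_nonneg_left hmain2 (Real.sqrt_nonneg _)
    _ = Real.sqrt (2 * dx * Lk) * ‖z - z'‖ ^ ((1 : ℝ) / 2) := by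
        rw [← Real.sqrt_eq_rpow, ← Real.sqrt_mul (by positivity : (0:ℝ) ≤ 2 * dx * Lk),
          ← Real.sqrt_mul (by positivity : (0:ℝ) ≤ (dx : ℝ))]
        congr 1
        ring
end

section
/- Let d_z ≥ 1, N ≥ 1 be integers and σ_w > 0, L_k ≥ 0, L_μ ≥ 0 reals. Let k : ℝ^{d_z} × ℝ^{d_z} → ℝ be a symmetric positive semidefinite kernel that is L_k-Lipschitz in each argument, and let μ : ℝ^{d_z} → ℝ be L_μ-Lipschitz. Fix data points z_1, …, z_N ∈ ℝ^{d_z} and observations y ∈ ℝ^N, let K be the Gram matrix K_{ij} = k(z_i, z_j), k_v(z) ∈ ℝ^N the vector with entries k(z_i, z), and μ_Z ∈ ℝ^N the vector with entries μ(z_i). Define the Gaussian process posterior mean μ_N(z) := μ(z) + k_v(z)ᵀ (K + σ_w² I_N)⁻¹ (y − μ_Z). Then for all z, z' ∈ ℝ^{d_z}: |μ_N(z) − μ_N(z')| ≤ ( L_μ + √N · L_k · ‖y − μ_Z‖ / σ_w² ) · ‖z − z'‖, where ‖y − μ_Z‖ is the Euclidean norm in ℝ^N. -/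
open Matrix

/-- The Gaussian process posterior mean
`μ_N(z) = μ(z) + k_v(z)ᵀ (K + σw² I)⁻¹ (y − μ_Z)`. -/
noncomputable def postMean {E : Type*} (k : E → E → ℝ) (μ : E → ℝ) (σw : ℝ) {m : ℕ}
    (zs : Fin m → E) (y : Fin m → ℝ) (z : E) : ℝ :=
  μ z + (fun i => k (zs i) z) ⬝ᵥ
    ((gramMatrix k zs + σw ^ 2 • (1 : Matrix (Fin m) (Fin m) ℝ))⁻¹ *ᵥ (fun i => y i - μ (zs i)))

/-- Lipschitz continuity of the GP posterior mean:
`|μ_N(z) − μ_N(z')| ≤ (L_μ + √N L_k ‖y − μ_Z‖ / σ_w²) ‖z − z'‖`. -/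
theorem stmt_7 (dz N : ℕ) (hdz : 1 ≤ dz) (hN : 1 ≤ N)
    (σw : ℝ) (hσw : 0 < σw) (Lk Lμ : ℝ) (hLk : 0 ≤ Lk) (hLμ : 0 ≤ Lμ)
    (k : EuclideanSpace ℝ (Fin dz) → EuclideanSpace ℝ (Fin dz) → ℝ)
    (hk : IsPSDKernel k)
    (hkLip : ∀ z z' w : EuclideanSpace ℝ (Fin dz), |k z w - k z' w| ≤ Lk * ‖z - z'‖)
    (μ : EuclideanSpace ℝ (Fin dz) → ℝ)
    (hμLip : ∀ z z' : EuclideanSpace ℝ (Fin dz), |μ z - μ z'| ≤ Lμ * ‖z - z'‖)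
    (zs : Fin N → EuclideanSpace ℝ (Fin dz)) (y : Fin N → ℝ) :
    ∀ z z' : EuclideanSpace ℝ (Fin dz),
      |postMean k μ σw zs y z - postMean k μ σw zs y z'| ≤
        (Lμ + Real.sqrt N * Lk *
            Real.sqrt (∑ i, (y i - μ (zs i)) ^ 2) / σw ^ 2) * ‖z - z'‖ := by
  intro z z'
  set A : Matrix (Fin N) (Fin N) ℝ :=
    gramMatrix k zs + σw ^ 2 • (1 : Matrix (Fin N) (Fin N) ℝ) with hAdef
  set r : Fin N → ℝ := fun i => y i - μ (zs i) with hrdef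
  set w : Fin N → ℝ := A⁻¹ *ᵥ r with hwdef
  -- PSD of the Gram part
  have hK : ∀ x : Fin N → ℝ, 0 ≤ x ⬝ᵥ ((gramMatrix k zs) *ᵥ x) := by
    intro x
    have := hk.2 N zs x
    have heq : x ⬝ᵥ ((gramMatrix k zs) *ᵥ x)
        = ∑ i, ∑ j, x i * x j * k (zs i) (zs j) := by
      simp [dotProduct, mulVec, Finset.mul_sum, gramMatrix]
      apply Finset.sum_congr rfl; intro i _
      apply Finset.sum_congr rfl; intro j _
      ring
    rw [heq]; exact this
  have hdot : ∀ x : Fin N → ℝ, σw ^ 2 * (∑ i, x i ^ 2) ≤ x ⬝ᵥ (A *ᵥ x) := by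
    intro x
    have : x ⬝ᵥ (A *ᵥ x) = x ⬝ᵥ ((gramMatrix k zs) *ᵥ x) + σw ^ 2 * (∑ i, x i ^ 2) := by
      simp only [hAdef, add_mulVec, Matrix.smul_mulVec, one_mulVec,
        dotProduct_add, dotProduct_smul, dotProduct, smul_eq_mul, Pi.smul_apply, sq,
        Finset.mul_sum]
      rw [← Finset.sum_add_distrib]
      apply Finset.sum_congr rfl; intro i _
      simp only [Pi.add_apply, Pi.smul_apply, smul_eq_mul]; ring
    linarith [hK x]
  -- A is positive definite
  have hPD : A.PosDef := by
    rw [Matrix.posDef_iff_dotProduct_mulVec]; constructor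
    · ext i j
      simp [hAdef, Matrix.IsHermitian, conjTranspose_apply, gramMatrix, hk.1 (zs i) (zs j),
        Matrix.one_apply, eq_comm]
    · intro x hx
      have h1 : 0 < ∑ i, x i ^ 2 := by
        have : ∑ i, x i ^ 2 ≠ 0 := by
          intro h0
          apply hx
          funext i
          have := (Finset.sum_eq_zero_iff_of_nonneg (fun i _ => sq_nonneg (x i))).1 h0 i
            (Finset.mem_univ i)
          exact pow_eq_zero_iff (n := 2) (by norm_num) |>.1 this
        positivity
      have := hdot x
      have h2 : 0 < σw ^ 2 * ∑ i, x i ^ 2 := by positivity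
      simp only [star_trivial]
      linarith
  have hAinv : A * A⁻¹ = 1 := Matrix.mul_nonsing_inv A (isUnit_iff_isUnit_det A |>.1 hPD.isUnit)
  have hAw : A *ᵥ w = r := by
    rw [hwdef, Matrix.mulVec_mulVec, hAinv, one_mulVec]
  -- norm notation
  set nr : ℝ := Real.sqrt (∑ i, r i ^ 2) with hnr
  set nw : ℝ := Real.sqrt (∑ i, w i ^ 2) with hnw
  have hnr0 : 0 ≤ nr := Real.sqrt_nonneg _
  have hnw0 : 0 ≤ nw := Real.sqrt_nonneg _
  -- bound nw ≤ nr / σw²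
  have hwbound : σw ^ 2 * nw ≤ nr := by
    have hCS : w ⬝ᵥ (A *ᵥ w) ≤ nw * nr := by
      have := Real.sum_mul_le_sqrt_mul_sqrt Finset.univ w (A *ᵥ w)
      rw [hAw] at this ⊢
      simpa [dotProduct] using this
    have hlow := hdot w
    have hsq : nw ^ 2 = ∑ i, w i ^ 2 := Real.sq_sqrt (by positivity)
    rcases eq_or_lt_of_le hnw0 with h0 | h0
    · rw [← h0, mul_zero]; exact hnr0
    · have h1 : σw ^ 2 * nw * nw ≤ nr * nw := by nlinarith
      exact le_of_mul_le_mul_right h1 h0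
  -- the difference vector
  set d : Fin N → ℝ := fun i => k (zs i) z - k (zs i) z' with hddef
  have hdbound : ∀ i, |d i| ≤ Lk * ‖z - z'‖ := by
    intro i
    have := hkLip z z' (zs i)
    rw [hddef]
    simpa [hk.1 (zs i) z, hk.1 (zs i) z'] using this
  have hdsum : Real.sqrt (∑ i, d i ^ 2) ≤ Real.sqrt N * (Lk * ‖z - z'‖) := by
    have h1 : ∑ i, d i ^ 2 ≤ (N : ℝ) * (Lk * ‖z - z'‖) ^ 2 := by
      calc ∑ i, d i ^ 2 ≤ ∑ _i : Fin N, (Lk * ‖z - z'‖) ^ 2 := by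
            apply Finset.sum_le_sum; intro i _
            have := hdbound i
            nlinarith [abs_nonneg (d i), le_abs_self (d i), neg_abs_le (d i)]
        _ = (N : ℝ) * (Lk * ‖z - z'‖) ^ 2 := by simp [Finset.sum_const]
    calc Real.sqrt (∑ i, d i ^ 2) ≤ Real.sqrt ((N : ℝ) * (Lk * ‖z - z'‖) ^ 2) :=
          Real.sqrt_le_sqrt h1
      _ = Real.sqrt N * (Lk * ‖z - z'‖) := by
          rw [Real.sqrt_mul (by positivity), Real.sqrt_sq (by positivity)]
  -- Cauchy–Schwarz for |d ⬝ᵥ w|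
  have hCS2 : |d ⬝ᵥ w| ≤ Real.sqrt (∑ i, d i ^ 2) * nw := by
    have h1 : |d ⬝ᵥ w| ≤ ∑ i, |d i| * |w i| := by
      simp only [dotProduct]
      calc |∑ i, d i * w i| ≤ ∑ i, |d i * w i| := Finset.abs_sum_le_sum_abs _ _
        _ = ∑ i, |d i| * |w i| := by simp [abs_mul]
    have h2 := Real.sum_mul_le_sqrt_mul_sqrt Finset.univ (fun i => |d i|) (fun i => |w i|)
    simp only [sq_abs] at h2
    exact h1.trans h2
  -- decompose the difference of posterior means
  have hdiff : postMean k μ σw zs y z - postMean k μ σw zs y z'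
      = (μ z - μ z') + d ⬝ᵥ w := by
    simp only [postMean, hddef, hwdef, hrdef, hAdef, dotProduct, sub_mul,
      Finset.sum_sub_distrib]
    ring
  rw [hdiff]
  have hz0 : 0 ≤ ‖z - z'‖ := norm_nonneg _
  calc |(μ z - μ z') + d ⬝ᵥ w| ≤ |μ z - μ z'| + |d ⬝ᵥ w| := abs_add_le _ _
    _ ≤ Lμ * ‖z - z'‖ + Real.sqrt (∑ i, d i ^ 2) * nw :=
        add_le_add (hμLip z z') hCS2
    _ ≤ Lμ * ‖z - z'‖ + (Real.sqrt N * (Lk * ‖z - z'‖)) * nw := by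
        gcongr
    _ ≤ (Lμ + Real.sqrt N * Lk * nr / σw ^ 2) * ‖z - z'‖ := by
        have hσ2 : (0:ℝ) < σw ^ 2 := by positivity
        have hsN : (0:ℝ) ≤ Real.sqrt N := Real.sqrt_nonneg _
        have hnwle : nw ≤ nr / σw ^ 2 := by rw [le_div_iff₀ hσ2]; nlinarith
        have h3 : Real.sqrt N * (Lk * ‖z - z'‖) * nw ≤
            Real.sqrt N * (Lk * ‖z - z'‖) * (nr / σw ^ 2) :=
          mul_le_mul_of_nonneg_left hnwle (by positivity)
        have h4 : (Lμ + Real.sqrt N * Lk * nr / σw ^ 2) * ‖z - z'‖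
            = Lμ * ‖z - z'‖ + Real.sqrt N * (Lk * ‖z - z'‖) * (nr / σw ^ 2) := by
          field_simp
        linarith
end

section
/- Let d_z ≥ 1, N ≥ 1 be integers and σ_w > 0. Let k : ℝ^{d_z} × ℝ^{d_z} → ℝ be a symmetric positive semidefinite kernel, fix data points z_1, …, z_N ∈ ℝ^{d_z}, and let σ_N²(z) := k(z, z) − k_v(z)ᵀ (K + σ_w² I_N)⁻¹ k_v(z) be the Gaussian process posterior variance, where K is the Gram matrix K_{ij} = k(z_i, z_j) and k_v(z) ∈ ℝ^N has entries k(z_i, z). Then σ_N²(z) ≥ 0 for all z, and for all z, z' ∈ ℝ^{d_z}, the posterior standard deviations σ_N(z) := √(σ_N²(z)) satisfy ( σ_N(z) − σ_N(z') )² ≤ k(z, z) − 2 k(z, z') + k(z', z'). -/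
open Matrix

/-- Gram matrices of a PSD kernel are positive semidefinite. -/
lemma gram_psd {E : Type*} (k : E → E → ℝ) (hk : IsPSDKernel k) {m : ℕ} (v : Fin m → E) :
    (gramMatrix k v).PosSemidef := by
  refine Matrix.PosSemidef.of_dotProduct_mulVec_nonneg ?_ ?_
  · ext i j
    simp [gramMatrix, Matrix.conjTranspose_apply, hk.1 (v i) (v j)]
  · intro x
    have h := hk.2 m v x
    have : x ⬝ᵥ (gramMatrix k v *ᵥ x) = ∑ i, ∑ j, x i * x j * k (v i) (v j) := by
      simp only [dotProduct, Matrix.mulVec, dotProduct, gramMatrix, Matrix.of_apply,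
        Finset.mul_sum]
      exact Finset.sum_congr rfl fun i _ => Finset.sum_congr rfl fun j _ => by ring
    simpa [this] using h

/-- σ² • 1 is positive definite. -/
lemma smul_one_posDef {m : ℕ} {c : ℝ} (hc : 0 < c) :
    (c • (1 : Matrix (Fin m) (Fin m) ℝ)).PosDef := by
  refine Matrix.PosDef.of_dotProduct_mulVec_pos ?_ ?_
  · ext i j
    simp [Matrix.conjTranspose_apply, Matrix.one_apply]
    split <;> simp_all [eq_comm]
  · intro x hx
    have h1 : (c • (1 : Matrix (Fin m) (Fin m) ℝ)) *ᵥ x = c • x := by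
      rw [Matrix.smul_mulVec, Matrix.one_mulVec]
    rw [h1]
    have h2 : star x ⬝ᵥ (c • x) = c * (x ⬝ᵥ x) := by
      simp [dotProduct_smul, star_trivial, smul_eq_mul]
    rw [h2]
    have h3 : 0 < x ⬝ᵥ x := by
      obtain ⟨i, hi⟩ := Function.ne_iff.1 hx
      have hi' : x i ≠ 0 := hi
      exact lt_of_lt_of_le (mul_self_pos.2 hi') (Finset.single_le_sum (f := fun j => x j * x j) (fun j _ => mul_self_nonneg _) (Finset.mem_univ i))
    exact mul_pos hc h3

/-- A real-number square-root inequality. -/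
lemma aux_sqrt {p p' t d : ℝ} (hp : 0 ≤ p) (hp' : 0 ≤ p') (ht : 0 ≤ t) (hd : 0 ≤ d)
    (h : p ≤ p' + d) : Real.sqrt (p ^ 2 + t) ≤ Real.sqrt (p' ^ 2 + t) + d := by
  set s' := Real.sqrt (p' ^ 2 + t) with hs'
  have hs'nn : 0 ≤ s' := Real.sqrt_nonneg _
  have hs'sq : s' ^ 2 = p' ^ 2 + t := Real.sq_sqrt (by positivity)
  have hps' : p' ≤ s' := by
    rw [hs']
    exact (Real.le_sqrt hp' (by positivity)).2 (by nlinarith)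
  have h1 : Real.sqrt (p ^ 2 + t) ≤ Real.sqrt ((p' + d) ^ 2 + t) := by
    apply Real.sqrt_le_sqrt
    have : p ^ 2 ≤ (p' + d) ^ 2 := by nlinarith
    linarith
  refine h1.trans ?_
  have h2 : (p' + d) ^ 2 + t ≤ (s' + d) ^ 2 := by nlinarith
  calc Real.sqrt ((p' + d) ^ 2 + t) ≤ Real.sqrt ((s' + d) ^ 2) := Real.sqrt_le_sqrt h2
    _ = s' + d := Real.sqrt_sq (by positivity)

/-- Nonnegativity of the GP posterior variance and the Hölder-type bound
`(σ_N(z) − σ_N(z'))² ≤ k(z,z) − 2 k(z,z') + k(z',z')` for the posterior standard deviations. -/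
theorem stmt_8 (dz N : ℕ) (hdz : 1 ≤ dz) (hN : 1 ≤ N) (σw : ℝ) (hσw : 0 < σw)
    (k : EuclideanSpace ℝ (Fin dz) → EuclideanSpace ℝ (Fin dz) → ℝ)
    (hk : IsPSDKernel k)
    (zs : Fin N → EuclideanSpace ℝ (Fin dz)) :
    (∀ z : EuclideanSpace ℝ (Fin dz), 0 ≤ postVar k σw zs z) ∧
      ∀ z z' : EuclideanSpace ℝ (Fin dz),
        (Real.sqrt (postVar k σw zs z) - Real.sqrt (postVar k σw zs z')) ^ 2 ≤
          k z z - 2 * k z z' + k z' z' := by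
  classical
  set K : Matrix (Fin N) (Fin N) ℝ := gramMatrix k zs with hKdef
  set A : Matrix (Fin N) (Fin N) ℝ := K + σw ^ 2 • 1 with hAdef
  have hKpsd : K.PosSemidef := gram_psd k hk zs
  have hApd : A.PosDef := by
    have := Matrix.PosDef.add_posSemidef (smul_one_posDef (m := N) (by positivity : (0:ℝ) < σw ^ 2)) hKpsd
    simpa [hAdef, add_comm] using this
  have hAdet : IsUnit A.det := (Matrix.isUnit_iff_isUnit_det A).1 hApd.isUnit
  have hAA : A * A⁻¹ = 1 := Matrix.mul_nonsing_inv A hAdet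
  have hAsymm : Aᵀ = A := by
    have h := hApd.isHermitian
    have : Aᴴ = Aᵀ := by ext i j; simp [Matrix.conjTranspose_apply]
    rw [← this]; exact h
  set kv : EuclideanSpace ℝ (Fin dz) → Fin N → ℝ := fun w i => k (zs i) w with hkv
  set astar : EuclideanSpace ℝ (Fin dz) → Fin N → ℝ := fun w => A⁻¹ *ᵥ kv w with hastar
  set g : EuclideanSpace ℝ (Fin dz) → (Fin N → ℝ) → ℝ := fun w a => k w w - 2 * (a ⬝ᵥ kv w) + a ⬝ᵥ (A *ᵥ a) with hg
  have hAstar : ∀ w, A *ᵥ astar w = kv w := by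
    intro w
    rw [hastar]
    simp only
    rw [Matrix.mulVec_mulVec, hAA, Matrix.one_mulVec]
  have hdotsymm : ∀ a b : Fin N → ℝ, a ⬝ᵥ (A *ᵥ b) = b ⬝ᵥ (A *ᵥ a) := by
    intro a b
    rw [Matrix.dotProduct_mulVec]
    rw [← hAsymm, Matrix.vecMul_transpose, hAsymm, dotProduct_comm]
  have hpostdef : ∀ w, postVar k σw zs w = k w w - kv w ⬝ᵥ astar w := by
    intro w
    rfl
  have hkey : ∀ w a, g w a = postVar k σw zs w + (a - astar w) ⬝ᵥ (A *ᵥ (a - astar w)) := by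
    intro w a
    have e1 : (a - astar w) ⬝ᵥ (A *ᵥ (a - astar w))
        = a ⬝ᵥ (A *ᵥ a) - a ⬝ᵥ kv w - a ⬝ᵥ kv w + astar w ⬝ᵥ kv w := by
      rw [Matrix.mulVec_sub, dotProduct_sub, sub_dotProduct,
        sub_dotProduct, hAstar, hdotsymm (astar w) a, hAstar]
      ring
    rw [hpostdef, e1, hg]
    simp only
    rw [dotProduct_comm (kv w) (astar w)]
    ring
  have hApsd_quad : ∀ c : Fin N → ℝ, 0 ≤ c ⬝ᵥ (A *ᵥ c) := by
    intro c
    have := hApd.posSemidef.dotProduct_mulVec_nonneg c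
    simpa using this
  have hdecomp : ∀ a : Fin N → ℝ, a ⬝ᵥ (A *ᵥ a) = a ⬝ᵥ (K *ᵥ a) + σw ^ 2 * (a ⬝ᵥ a) := by
    intro a
    rw [hAdef, Matrix.add_mulVec, dotProduct_add, Matrix.smul_mulVec,
      Matrix.one_mulVec]
    simp [dotProduct_smul, smul_eq_mul]
  have hg_nonneg : ∀ w a, 0 ≤ g w a := by
    intro w a
    have h := hk.2 (N + 1) (Fin.cons w zs) (Fin.cons 1 (fun i => -a i))
    have e3 : a ⬝ᵥ (K *ᵥ a) = ∑ i, ∑ j, a i * a j * k (zs i) (zs j) := by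
      simp only [dotProduct, Matrix.mulVec, hKdef, gramMatrix, Matrix.of_apply,
        Finset.mul_sum]
      exact Finset.sum_congr rfl fun i _ => Finset.sum_congr rfl fun j _ => by ring
    have e4 : a ⬝ᵥ kv w = ∑ i, a i * k (zs i) w := rfl
    have hsymm : ∀ j, k w (zs j) = k (zs j) w := fun j => hk.1 _ _
    have hsum : ∑ i, ∑ j, (Fin.cons (1:ℝ) (fun i => -a i) : Fin (N+1) → ℝ) i
          * (Fin.cons (1:ℝ) (fun i => -a i) : Fin (N+1) → ℝ) j
          * k ((Fin.cons w zs : Fin (N+1) → EuclideanSpace ℝ (Fin dz)) i)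
            ((Fin.cons w zs : Fin (N+1) → EuclideanSpace ℝ (Fin dz)) j)
        = k w w - 2 * (a ⬝ᵥ kv w) + a ⬝ᵥ (K *ᵥ a) := by
      simp only [Fin.sum_univ_succ, Fin.cons_zero, Fin.cons_succ, one_mul, mul_one, neg_mul,
        mul_neg, neg_neg, Finset.sum_add_distrib, Finset.sum_neg_distrib, hsymm]
      rw [e3, e4]
      ring
    have hquad : 0 ≤ k w w - 2 * (a ⬝ᵥ kv w) + a ⬝ᵥ (K *ᵥ a) := by
      rw [← hsum]; exact h
    have hnn : 0 ≤ σw ^ 2 * (a ⬝ᵥ a) := by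
      apply mul_nonneg (by positivity)
      exact Finset.sum_nonneg fun i _ => mul_self_nonneg (a i)
    rw [hg]
    simp only
    rw [hdecomp]
    linarith
  have hpost_eq : ∀ w, postVar k σw zs w = g w (astar w) := by
    intro w
    have h := hkey w (astar w)
    simpa [zero_dotProduct] using h.symm
  have hpost_nonneg : ∀ w, 0 ≤ postVar k σw zs w := by
    intro w
    rw [hpost_eq w]; exact hg_nonneg w _
  refine ⟨hpost_nonneg, ?_⟩
  intro z z'
  have hpost_le : ∀ w a, postVar k σw zs w ≤ g w a := by
    intro w a
    rw [hkey w a]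
    have := hApsd_quad (a - astar w)
    linarith
  -- feature map
  set v : Fin (N + 2) → EuclideanSpace ℝ (Fin dz) := Fin.cons z (Fin.cons z' zs) with hv
  obtain ⟨B, hB⟩ : ∃ B : Matrix (Fin (N + 2)) (Fin (N + 2)) ℝ, gramMatrix k v = Bᴴ * B := by
    open scoped MatrixOrder in
    exact CStarAlgebra.nonneg_iff_eq_star_mul_self.mp (Matrix.nonneg_iff_posSemidef.mpr (gram_psd k hk v))
  set φ : Fin (N + 2) → EuclideanSpace ℝ (Fin (N + 2)) := fun i => WithLp.toLp 2 (fun r => B r i) with hφdef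
  have hφ : ∀ i j, (inner ℝ (φ i) (φ j) : ℝ) = k (v i) (v j) := by
    intro i j
    have h1 : k (v i) (v j) = (Bᴴ * B) i j := by
      rw [← hB]; rfl
    rw [h1, Matrix.mul_apply]
    rw [PiLp.inner_apply]
    exact Finset.sum_congr rfl fun r _ => by
      simp [hφdef, Matrix.conjTranspose_apply, RCLike.inner_apply, mul_comm]
  set x : EuclideanSpace ℝ (Fin (N + 2)) := φ 0 with hx
  set x' : EuclideanSpace ℝ (Fin (N + 2)) := φ (Fin.succ 0) with hx'
  set u : Fin N → EuclideanSpace ℝ (Fin (N + 2)) := fun i => φ i.succ.succ with hu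
  have hv0 : v 0 = z := rfl
  have hv1 : v (Fin.succ 0) = z' := rfl
  have hvs : ∀ i : Fin N, v i.succ.succ = zs i := fun i => by
    rw [hv]
    rw [Fin.cons_succ, Fin.cons_succ]
  have hxx : (inner ℝ x x : ℝ) = k z z := by rw [hx, hφ]; rfl
  have hxx' : (inner ℝ x x' : ℝ) = k z z' := by rw [hx, hx', hφ]; rfl
  have hx'x' : (inner ℝ x' x' : ℝ) = k z' z' := by rw [hx', hφ]; rfl
  have hxu : ∀ i, (inner ℝ x (u i) : ℝ) = k (zs i) z := by
    intro i; rw [hx, hu]; simp only; rw [hφ, hv0, hvs, hk.1]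
  have hx'u : ∀ i, (inner ℝ x' (u i) : ℝ) = k (zs i) z' := by
    intro i; rw [hx', hu]; simp only; rw [hφ, hv1, hvs, hk.1]
  have huu : ∀ i j, (inner ℝ (u i) (u j) : ℝ) = k (zs i) (zs j) := by
    intro i j; rw [hu]; simp only; rw [hφ, hvs, hvs]
  -- g expressed with features
  have hfeat : ∀ (w : EuclideanSpace ℝ (Fin dz)) (y : EuclideanSpace ℝ (Fin (N + 2))),
      (inner ℝ y y : ℝ) = k w w → (∀ i, (inner ℝ y (u i) : ℝ) = k (zs i) w) →
      ∀ a : Fin N → ℝ, g w a = ‖y - ∑ i, a i • u i‖ ^ 2 + σw ^ 2 * (a ⬝ᵥ a) := by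
    intro w y hyy hyu a
    have hS : (inner ℝ y (∑ i, a i • u i) : ℝ) = a ⬝ᵥ kv w := by
      rw [inner_sum]
      simp only [real_inner_smul_right]
      have e4 : a ⬝ᵥ kv w = ∑ i, a i * k (zs i) w := rfl
      rw [e4]
      exact Finset.sum_congr rfl fun i _ => by rw [hyu i]
    have hSS : (inner ℝ (∑ i, a i • u i) (∑ i, a i • u i) : ℝ) = a ⬝ᵥ (K *ᵥ a) := by
      rw [sum_inner]
      have : ∀ i, (inner ℝ (a i • u i) (∑ j, a j • u j) : ℝ) = a i * ∑ j, a j * k (zs i) (zs j) := by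
        intro i
        rw [real_inner_smul_left, inner_sum]
        simp only [real_inner_smul_right]
        congr 1
        exact Finset.sum_congr rfl fun j _ => by rw [huu]
      calc ∑ i, (inner ℝ (a i • u i) (∑ j, a j • u j) : ℝ)
          = ∑ i, a i * ∑ j, a j * k (zs i) (zs j) := Finset.sum_congr rfl fun i _ => this i
        _ = a ⬝ᵥ (K *ᵥ a) := by
            simp only [dotProduct, Matrix.mulVec, hKdef, gramMatrix, Matrix.of_apply]
            exact Finset.sum_congr rfl fun i _ => by
              rw [Finset.mul_sum, Finset.mul_sum]
              exact Finset.sum_congr rfl fun j _ => by ring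
    have hnorm : ‖y - ∑ i, a i • u i‖ ^ 2
        = k w w - 2 * (a ⬝ᵥ kv w) + a ⬝ᵥ (K *ᵥ a) := by
      rw [norm_sub_sq_real, ← real_inner_self_eq_norm_sq, ← real_inner_self_eq_norm_sq,
        hyy, hS, hSS]
    rw [hg]
    simp only
    rw [hdecomp, hnorm]
    ring
  have hFz := hfeat z x hxx hxu
  have hFz' := hfeat z' x' hx'x' hx'u
  have hdist : ‖x - x'‖ ^ 2 = k z z - 2 * k z z' + k z' z' := by
    rw [norm_sub_sq_real, ← real_inner_self_eq_norm_sq, ← real_inner_self_eq_norm_sq,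
      hxx, hxx', hx'x']
  set d : ℝ := ‖x - x'‖ with hd
  have hdnn : 0 ≤ d := norm_nonneg _
  -- main inequality both ways
  have hmain : ∀ (w w' : EuclideanSpace ℝ (Fin dz)) (y y' : EuclideanSpace ℝ (Fin (N + 2))),
      (∀ a, g w a = ‖y - ∑ i, a i • u i‖ ^ 2 + σw ^ 2 * (a ⬝ᵥ a)) →
      (∀ a, g w' a = ‖y' - ∑ i, a i • u i‖ ^ 2 + σw ^ 2 * (a ⬝ᵥ a)) →
      Real.sqrt (postVar k σw zs w) ≤ Real.sqrt (postVar k σw zs w') + ‖y - y'‖ := by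
    intro w w' y y' hFw hFw'
    set a0 := astar w' with ha0
    have h1 : Real.sqrt (postVar k σw zs w) ≤ Real.sqrt (g w a0) :=
      Real.sqrt_le_sqrt (hpost_le w a0)
    refine h1.trans ?_
    have h2 : postVar k σw zs w' = g w' a0 := hpost_eq w'
    rw [h2]
    rw [hFw, hFw']
    set S := ∑ i, a0 i • u i
    have htri : ‖y - S‖ ≤ ‖y' - S‖ + ‖y - y'‖ := by
      have : y - S = (y' - S) + (y - y') := by abel
      rw [this]
      exact norm_add_le _ _
    exact aux_sqrt (norm_nonneg _) (norm_nonneg _)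
      (mul_nonneg (by positivity) (Finset.sum_nonneg fun i _ => mul_self_nonneg (a0 i)))
      (norm_nonneg _) htri
  have h1 : Real.sqrt (postVar k σw zs z) ≤ Real.sqrt (postVar k σw zs z') + d := by
    have := hmain z z' x x' hFz hFz'
    rwa [← hd] at this
  have h2 : Real.sqrt (postVar k σw zs z') ≤ Real.sqrt (postVar k σw zs z) + d := by
    have := hmain z' z x' x hFz' hFz
    rwa [norm_sub_rev, ← hd] at this
  have : (Real.sqrt (postVar k σw zs z) - Real.sqrt (postVar k σw zs z')) ^ 2 ≤ d ^ 2 := by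
    nlinarith
  calc (Real.sqrt (postVar k σw zs z) - Real.sqrt (postVar k σw zs z')) ^ 2 ≤ d ^ 2 := this
    _ = k z z - 2 * k z z' + k z' z' := by rw [hd, hdist]
end

section
/- Let d_z ≥ 1, N ≥ 1 be integers and σ_w > 0. Let k : ℝ^{d_z} × ℝ^{d_z} → ℝ be a symmetric positive semidefinite kernel and fix points z_1, …, z_N ∈ ℝ^{d_z}. For t = 1, …, N let σ_{t−1}²(z_t) denote the Gaussian process posterior variance at z_t computed from the first t − 1 points (with σ_0²(z_1) := k(z_1, z_1)), and let K_N be the N×N Gram matrix (K_N)_{ij} = k(z_i, z_j). Then log det( I_N + σ_w⁻² K_N ) = ∑_{t=1}^{N} log( 1 + σ_w⁻² σ_{t−1}²(z_t) ). -/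
open Matrix

noncomputable def Mmat {E : Type*} (k : E → E → ℝ) (σw : ℝ) {m : ℕ} (zs : Fin m → E) :
    Matrix (Fin m) (Fin m) ℝ :=
  gramMatrix k zs + σw ^ 2 • (1 : Matrix (Fin m) (Fin m) ℝ)

lemma Mmat_posDef {E : Type*} {k : E → E → ℝ} (hk : IsPSDKernel k) {σw : ℝ} (hσw : 0 < σw)
    {m : ℕ} (zs : Fin m → E) : (Mmat k σw zs).PosDef := by
  refine Matrix.posDef_iff_dotProduct_mulVec.mpr ⟨?_, ?_⟩
  · ext i j
    simp [Mmat, gramMatrix, Matrix.add_apply, Matrix.smul_apply, Matrix.one_apply,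
      hk.1 (zs i) (zs j), eq_comm]
  · intro x hx
    have h1 : dotProduct (star x) (Mmat k σw zs *ᵥ x) =
        (∑ i, ∑ j, x i * x j * k (zs i) (zs j)) + σw ^ 2 * ∑ i, x i * x i := by
      simp only [Mmat, Matrix.add_apply, Matrix.smul_apply, Matrix.one_apply, gramMatrix, of_apply,
        mulVec, dotProduct, star_trivial, smul_eq_mul, add_mul, Finset.sum_add_distrib, mul_add,
        Finset.mul_sum, ite_mul, zero_mul, mul_ite, mul_zero, mul_one,
        Finset.sum_ite_eq, Finset.mem_univ, if_true]
      congr 1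
      · exact Finset.sum_congr rfl fun i _ => Finset.sum_congr rfl fun j _ => by ring
      · exact Finset.sum_congr rfl fun i _ => by ring
    rw [h1]
    have h2 := hk.2 m zs x
    have h3 : 0 < ∑ i, x i * x i := by
      have hne : ∃ i, x i ≠ 0 := by
        by_contra h
        push_neg at h
        exact hx (funext h)
      obtain ⟨i, hi⟩ := hne
      exact Finset.sum_pos' (fun j _ => mul_self_nonneg (x j))
        ⟨i, Finset.mem_univ i, mul_self_pos.mpr hi⟩
    positivity

lemma det_Mmat_succ {E : Type*} {k : E → E → ℝ} (hk : IsPSDKernel k) {σw : ℝ} (hσw : 0 < σw)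
    {m : ℕ} (zs : Fin (m + 1) → E) :
    (Mmat k σw zs).det = (Mmat k σw (zs ∘ Fin.castSucc)).det *
      (σw ^ 2 + postVar k σw (zs ∘ Fin.castSucc) (zs (Fin.last m))) := by
  set A := Mmat k σw (zs ∘ Fin.castSucc) with hA
  set b : Fin m → ℝ := fun i => k (zs (Fin.castSucc i)) (zs (Fin.last m)) with hb
  set B : Matrix (Fin m) (Fin 1) ℝ := Matrix.of fun i _ => b i with hB
  set C : Matrix (Fin 1) (Fin m) ℝ := Matrix.of fun _ j => b j with hC
  set D : Matrix (Fin 1) (Fin 1) ℝ :=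
    Matrix.of fun _ _ => k (zs (Fin.last m)) (zs (Fin.last m)) + σw ^ 2 with hD
  have hpd : A.PosDef := Mmat_posDef hk hσw _
  haveI : Invertible A := A.invertibleOfIsUnitDet hpd.det_pos.ne'.isUnit
  have hsub : (Mmat k σw zs).submatrix (finSumFinEquiv (m := m) (n := 1))
      (finSumFinEquiv (m := m) (n := 1)) = fromBlocks A B C D := by
    ext i j
    cases i with
    | inl i =>
      cases j with
      | inl j =>
        simp [hA, Mmat, gramMatrix, Matrix.add_apply, Matrix.smul_apply, Matrix.one_apply,
          Function.comp, Fin.ext_iff, Fin.castSucc, Fin.castAdd, Fin.castLE]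
      | inr j =>
        have hj : j = 0 := Subsingleton.elim _ _
        have hne : (↑(Fin.castAdd 1 i) : ℕ) ≠ ↑(Fin.natAdd m j) := by
          subst hj; simp [Fin.castAdd, Fin.natAdd, Fin.castLE]; omega
        have hlast : Fin.natAdd m j = Fin.last m := by subst hj; ext; simp
        simp [hB, hb, hlast, Mmat, gramMatrix, Matrix.add_apply, Matrix.smul_apply,
          Matrix.one_apply, Fin.ext_iff, hne, Function.comp, Fin.castSucc, Fin.castAdd, Fin.castLE]
        intro h
        exact absurd h (by omega)
    | inr i =>
      cases j with
      | inl j =>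
        have hi : i = 0 := Subsingleton.elim _ _
        have hne : (↑(Fin.natAdd m i) : ℕ) ≠ ↑(Fin.castAdd 1 j) := by
          subst hi; simp [Fin.castAdd, Fin.natAdd, Fin.castLE]; omega
        have hlast : Fin.natAdd m i = Fin.last m := by subst hi; ext; simp
        simp [hC, hb, hlast, Mmat, gramMatrix, Matrix.add_apply, Matrix.smul_apply,
          Matrix.one_apply, Fin.ext_iff, hne, Function.comp, Fin.castSucc, Fin.castAdd, Fin.castLE,
          hk.1]
        intro h
        exact absurd h (by omega)
      | inr j =>
        have hi : i = 0 := Subsingleton.elim _ _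
        have hj : j = 0 := Subsingleton.elim _ _
        have hlast : Fin.natAdd m i = Fin.last m := by subst hi; ext; simp
        subst hi hj
        simp [hD, hlast, Mmat, gramMatrix, Matrix.add_apply, Matrix.smul_apply,
          Matrix.one_apply]
  have hdet : (Mmat k σw zs).det = (fromBlocks A B C D).det := by
    rw [← hsub, Matrix.det_submatrix_equiv_self]
  rw [hdet, Matrix.det_fromBlocks₁₁, Matrix.invOf_eq_nonsing_inv]
  congr 1
  rw [Matrix.det_fin_one]
  simp only [Matrix.sub_apply, hD, Matrix.of_apply]
  have : (C * A⁻¹ * B) 0 0 = b ⬝ᵥ (A⁻¹ *ᵥ b) := by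
    simp only [Matrix.mul_apply, Matrix.mulVec, dotProduct, hC, hB, of_apply,
      Finset.sum_mul, Finset.mul_sum]
    rw [Finset.sum_comm]
    exact Finset.sum_congr rfl fun j _ => Finset.sum_congr rfl fun l _ => by ring
  rw [this, postVar]
  have hAeq : A = gramMatrix k (zs ∘ Fin.castSucc) +
      σw ^ 2 • (1 : Matrix (Fin m) (Fin m) ℝ) := rfl
  rw [← hAeq]
  ring_nf
  rfl

lemma det_Mmat_eq_prod {E : Type*} {k : E → E → ℝ} (hk : IsPSDKernel k) {σw : ℝ} (hσw : 0 < σw) :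
    ∀ (n : ℕ) (zs : Fin n → E),
      (Mmat k σw zs).det = ∏ t : Fin n,
        (σw ^ 2 + postVar k σw (fun i : Fin t.val => zs (Fin.castLE t.isLt.le i)) (zs t)) := by
  intro n
  induction n with
  | zero => intro zs; simp [Matrix.det_isEmpty]
  | succ n ih =>
    intro zs
    rw [det_Mmat_succ hk hσw zs, ih (zs ∘ Fin.castSucc), Fin.prod_univ_castSucc]
    congr 1

lemma factor_pos {E : Type*} {k : E → E → ℝ} (hk : IsPSDKernel k) {σw : ℝ} (hσw : 0 < σw)
    {m : ℕ} (zs : Fin m → E) (z : E) : 0 < σw ^ 2 + postVar k σw zs z := by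
  have h := det_Mmat_succ hk hσw (Fin.snoc zs z)
  have h1 : Fin.snoc zs z ∘ Fin.castSucc = zs := by ext i; simp
  have h2 : (Fin.snoc zs z : Fin (m + 1) → E) (Fin.last m) = z := by simp
  rw [h1, h2] at h
  have hbig := (Mmat_posDef hk hσw (Fin.snoc zs z)).det_pos
  have hsmall := (Mmat_posDef hk hσw zs).det_pos
  rw [h] at hbig
  nlinarith

/-- The log-determinant of `I + σ_w⁻² K_N` decomposes as a sum of sequential posterior
variance terms: `log det(I + σ_w⁻² K_N) = ∑_{t=1}^N log(1 + σ_w⁻² σ_{t−1}²(z_t))`. -/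
theorem stmt_13 (dz N : ℕ) (hdz : 1 ≤ dz) (hN : 1 ≤ N)
    (σw : ℝ) (hσw : 0 < σw)
    (k : EuclideanSpace ℝ (Fin dz) → EuclideanSpace ℝ (Fin dz) → ℝ)
    (hk : IsPSDKernel k)
    (zs : Fin N → EuclideanSpace ℝ (Fin dz)) :
    Real.log (Matrix.det (1 + (σw ^ 2)⁻¹ • gramMatrix k zs)) =
      ∑ t : Fin N,
        Real.log (1 + (σw ^ 2)⁻¹ *
          postVar k σw (fun i : Fin t.val => zs (Fin.castLE t.isLt.le i)) (zs t)) := by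
  have hσ2 : (0 : ℝ) < σw ^ 2 := pow_pos hσw 2
  have hσ2ne : (σw ^ 2 : ℝ) ≠ 0 := hσ2.ne'
  have hM : (1 : Matrix (Fin N) (Fin N) ℝ) + (σw ^ 2)⁻¹ • gramMatrix k zs =
      (σw ^ 2)⁻¹ • Mmat k σw zs := by
    rw [Mmat, smul_add, smul_smul, inv_mul_cancel₀ hσ2ne, one_smul, add_comm]
  have key : Matrix.det (1 + (σw ^ 2)⁻¹ • gramMatrix k zs) =
      ∏ t : Fin N, (1 + (σw ^ 2)⁻¹ *
        postVar k σw (fun i : Fin t.val => zs (Fin.castLE t.isLt.le i)) (zs t)) := by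
    rw [hM, Matrix.det_smul, det_Mmat_eq_prod hk hσw N zs]
    rw [show ((σw ^ 2)⁻¹ : ℝ) ^ Fintype.card (Fin N) = ∏ _t : Fin N, (σw ^ 2)⁻¹ by
      simp [Finset.prod_const, Finset.card_univ]]
    rw [← Finset.prod_mul_distrib]
    refine Finset.prod_congr rfl fun t _ => ?_
    rw [mul_add, inv_mul_cancel₀ hσ2ne]
  rw [key]
  refine Real.log_prod fun t _ => ?_
  have hp := factor_pos hk hσw (fun i : Fin t.val => zs (Fin.castLE t.isLt.le i)) (zs t)
  have : 1 + (σw ^ 2)⁻¹ * postVar k σw (fun i : Fin t.val => zs (Fin.castLE t.isLt.le i)) (zs t)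
      = (σw ^ 2)⁻¹ * (σw ^ 2 + postVar k σw (fun i : Fin t.val => zs (Fin.castLE t.isLt.le i)) (zs t)) := by
    rw [mul_add, inv_mul_cancel₀ hσ2ne]
  rw [this]
  exact (mul_pos (inv_pos.mpr hσ2) hp).ne'
end
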